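/- The partial derivative of the DEL penalty R(z) = ∑_i p_i(z) B_i(z) with respect to the logit z_k equals p_k(B_k - R(z) + σ(z_k) - y_k), where p = S(z) is the softmax, σ is the sigmoid, y is a one-hot label, and B_i(z) = -y_i log σ(z_i) - (1-y_i) log(1 - σ(z_i)). -/

import Mathlib

open Finset

noncomputable def sigm11 (t : ℝ) : ℝ := 1 / (1 + Real.exp (-t))

noncomputable def smax11 (z : Fin 10 → ℝ) (i : Fin 10) : ℝ :=
  Real.exp (z i) / ∑ j, Real.exp (z j)

noncomputable def bce11 (y : Fin 10 → ℝ) (z : Fin 10 → ℝ) (i : Fin 10) : ℝ :=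
  -(y i) * Real.log (sigm11 (z i)) - (1 - y i) * Real.log (1 - sigm11 (z i))

noncomputable def delR (y : Fin 10 → ℝ) (z : Fin 10 → ℝ) : ℝ :=
  ∑ i, smax11 z i * bce11 y z i

lemma bce_aux (a t : ℝ) :
    -a * Real.log (sigm11 t) - (1 - a) * Real.log (1 - sigm11 t)
      = Real.log (1 + Real.exp (-t)) + (1 - a) * t := by
  have hu : (0:ℝ) < 1 + Real.exp (-t) := by positivity
  have h1 : Real.log (sigm11 t) = -Real.log (1 + Real.exp (-t)) := by
    unfold sigm11
    rw [Real.log_div one_ne_zero (ne_of_gt hu), Real.log_one]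
    ring
  have h2 : 1 - sigm11 t = Real.exp (-t) / (1 + Real.exp (-t)) := by
    unfold sigm11; field_simp; ring
  have h3 : Real.log (1 - sigm11 t) = -t - Real.log (1 + Real.exp (-t)) := by
    rw [h2, Real.log_div (Real.exp_ne_zero _) (ne_of_gt hu), Real.log_exp]
  rw [h1, h3]; ring


/-- The partial derivative of the DEL penalty `R(z) = ∑ᵢ pᵢ(z) Bᵢ(z)` with respect
to the logit `z_k` equals `p_k (B_k - R(z) + σ(z_k) - y_k)`. -/
theorem stmt_11 (g : Fin 10) (y : Fin 10 → ℝ)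
    (hy : y = fun i => if i = g then 1 else 0) (z : Fin 10 → ℝ) (k : Fin 10) :
    HasDerivAt (fun t => delR y (Function.update z k t))
      (smax11 z k * (bce11 y z k - delR y z + sigm11 (z k) - y k)) (z k) := by
  set C : ℝ := ∑ j ∈ univ \ {k}, Real.exp (z j) with hC
  set A : ℝ := ∑ i ∈ univ \ {k}, Real.exp (z i) * bce11 y z i with hA
  set t₀ : ℝ := z k with ht₀
  have hCpos : 0 ≤ C := Finset.sum_nonneg fun j _ => (Real.exp_pos _).le
  have hDpos : ∀ t : ℝ, 0 < Real.exp t + C := fun t => by positivity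
  set L : ℝ → ℝ := fun t => Real.log (1 + Real.exp (-t)) + (1 - y k) * t with hLdef
  have hfun : ∀ t, delR y (Function.update z k t)
      = (A + Real.exp t * L t) / (Real.exp t + C) := by
    intro t
    have hS : ∑ j, Real.exp (Function.update z k t j) = Real.exp t + C := by
      rw [show (fun j => Real.exp (Function.update z k t j))
          = Function.update (fun j => Real.exp (z j)) k (Real.exp t) by
        funext j
        by_cases h : j = k
        · subst h; simp
        · simp [Function.update_of_ne h]]
      rw [Finset.sum_update_of_mem (mem_univ k)]
    have hB : ∀ i, Real.exp (Function.update z k t i) * bce11 y (Function.update z k t) i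
        = Function.update (fun i => Real.exp (z i) * bce11 y z i) k (Real.exp t * L t) i := by
      intro i
      by_cases h : i = k
      · subst h
        simp only [Function.update_self]
        unfold bce11
        rw [Function.update_self, bce_aux]
      · unfold bce11
        simp [Function.update_of_ne h]
    unfold delR smax11
    rw [hS]
    have : ∀ i : Fin 10, Real.exp (Function.update z k t i) / (Real.exp t + C)
        * bce11 y (Function.update z k t) i
        = Function.update (fun i => Real.exp (z i) * bce11 y z i) k (Real.exp t * L t) i
          / (Real.exp t + C) := by
      intro i; rw [div_mul_eq_mul_div, hB i]
    have hsum : ∑ i, Real.exp (Function.update z k t i) / (Real.exp t + C)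
        * bce11 y (Function.update z k t) i
        = (∑ i, Function.update (fun i => Real.exp (z i) * bce11 y z i) k
            (Real.exp t * L t) i) / (Real.exp t + C) := by
      rw [Finset.sum_div]; exact Finset.sum_congr rfl (fun i _ => this i)
    rw [hsum, Finset.sum_update_of_mem (mem_univ k), hA]
    ring_nf
  -- derivative of L
  have hexp : HasDerivAt (fun t : ℝ => Real.exp (-t)) (-Real.exp (-t₀)) t₀ := by
    have := ((hasDerivAt_id t₀).neg).exp
    simpa using this
  have hu0 : (1 + Real.exp (-t₀)) ≠ 0 := by positivity
  have hL : HasDerivAt L (-Real.exp (-t₀) / (1 + Real.exp (-t₀)) + (1 - y k)) t₀ := by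
    have h1 : HasDerivAt (fun t : ℝ => Real.log (1 + Real.exp (-t)))
        (-Real.exp (-t₀) / (1 + Real.exp (-t₀))) t₀ := by
      have := ((hexp.const_add 1).log hu0)
      simpa using this
    have h2 : HasDerivAt (fun t : ℝ => (1 - y k) * t) (1 - y k) t₀ := by
      simpa using (hasDerivAt_id t₀).const_mul (1 - y k)
    exact h1.add h2
  have hN : HasDerivAt (fun t => A + Real.exp t * L t)
      (Real.exp t₀ * L t₀ + Real.exp t₀ * (-Real.exp (-t₀) / (1 + Real.exp (-t₀)) + (1 - y k))) t₀ :=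
    ((Real.hasDerivAt_exp t₀).mul hL).const_add A
  have hD : HasDerivAt (fun t => Real.exp t + C) (Real.exp t₀) t₀ :=
    (Real.hasDerivAt_exp t₀).add_const C
  have hdiv := hN.div hD (ne_of_gt (hDpos t₀))
  have hfuneq : (fun t => delR y (Function.update z k t))
      = fun t => (A + Real.exp t * L t) / (Real.exp t + C) := funext hfun
  rw [hfuneq]
  refine hdiv.congr_deriv ?_
  -- value equality
  have hsm : smax11 z k = Real.exp t₀ / (Real.exp t₀ + C) := by
    unfold smax11
    have hS : ∑ j, Real.exp (z j) = Real.exp t₀ + C := by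
      have := Finset.sum_update_of_mem (s := univ) (f := fun j => Real.exp (z j))
        (mem_univ k) (b := Real.exp t₀)
      calc ∑ j, Real.exp (z j) = ∑ j, Function.update (fun j => Real.exp (z j)) k (Real.exp t₀) j := by
            apply Finset.sum_congr rfl
            intro j _
            by_cases h : j = k
            · subst h; simp [ht₀]
            · simp [Function.update_of_ne h]
        _ = Real.exp t₀ + C := this
    rw [hS]
  have hR : delR y z = (A + Real.exp t₀ * L t₀) / (Real.exp t₀ + C) := by
    have := hfun t₀
    rwa [Function.update_eq_self] at this
  have hbk : bce11 y z k = L t₀ := by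
    unfold bce11; rw [bce_aux]
  have h4 : -Real.exp (-t₀) / (1 + Real.exp (-t₀)) + (1 - y k)
      = sigm11 t₀ - y k := by
    unfold sigm11
    field_simp
    ring
  rw [hsm, hR, hbk, h4]
  have hD0 : Real.exp t₀ + C ≠ 0 := ne_of_gt (hDpos t₀)
  generalize L t₀ = l
  generalize sigm11 t₀ = s
  generalize hE : Real.exp t₀ = a at hD0 ⊢
  field_simp
  ring
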